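/- Let A be a C*-algebra and X ⊆ A a closed linear subspace such that x y* z ∈ X for all x, y, z ∈ X. Then the closed linear span of {x y* z : x, y, z ∈ X} equals X. -/

import Mathlib

open scoped ContinuousMapZero

/-- If `X` is a closed subspace of a C*-algebra with `x y* z ∈ X` for all `x, y, z ∈ X`,
then the closed linear span of `{x y* z : x, y, z ∈ X}` equals `X`. -/
theorem stmt12 {A : Type*} [NormedRing A] [StarRing A] [CStarRing A]
    [NormedAlgebra ℂ A] [StarModule ℂ A] [CompleteSpace A]
    (X : Submodule ℂ A) (hXc : IsClosed (X : Set A))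
    (hX : ∀ x ∈ X, ∀ y ∈ X, ∀ z ∈ X, x * star y * z ∈ X) :
    (Submodule.span ℂ {a : A | ∃ x ∈ X, ∃ y ∈ X, ∃ z ∈ X,
        a = x * star y * z}).topologicalClosure = X := by
  letI : CStarAlgebra A :=
    { toNormedRing := ‹_›, toStarRing := ‹_›, toCStarRing := ‹_›,
      toNormedAlgebra := ‹_›, toStarModule := ‹_›, toCompleteSpace := ‹_› }
  set S : Set A := {a : A | ∃ x ∈ X, ∃ y ∈ X, ∃ z ∈ X, a = x * star y * z} with hS
  refine le_antisymm (Submodule.topologicalClosure_minimal _ ?_ hXc) ?_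
  · rw [Submodule.span_le]
    rintro _ ⟨x, hx, y, hy, z, hz, rfl⟩
    exact hX x hx y hy z hz
  intro x hx
  set a : A := star x * x with ha_def
  have ha : IsSelfAdjoint a := IsSelfAdjoint.star_mul_self x
  -- Step 1: elements of the star algebra generated by `a` multiply `X` into `span S`.
  have key : ∀ b ∈ NonUnitalStarAlgebra.adjoin ℝ ({a} : Set A), ∀ u ∈ X,
      (u * b ∈ X ∧ u * b ∈ Submodule.span ℂ S) ∧
      (u * star b ∈ X ∧ u * star b ∈ Submodule.span ℂ S) := by
    intro b hb
    induction hb using NonUnitalStarAlgebra.adjoin_induction with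
    | mem c hc =>
      rcases hc with rfl
      intro u hu
      have h1 : u * a ∈ X := by
        rw [ha_def, ← mul_assoc]; exact hX u hu x hx x hx
      have h2 : u * a ∈ Submodule.span ℂ S := by
        apply Submodule.subset_span
        exact ⟨u, hu, x, hx, x, hx, by rw [ha_def, mul_assoc]⟩
      exact ⟨⟨h1, h2⟩, by rw [ha.star_eq]; exact ⟨h1, h2⟩⟩
    | add b c hb hc ihb ihc =>
      intro u hu
      refine ⟨⟨?_, ?_⟩, ?_, ?_⟩
      · rw [mul_add]; exact add_mem (ihb u hu).1.1 (ihc u hu).1.1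
      · rw [mul_add]; exact add_mem (ihb u hu).1.2 (ihc u hu).1.2
      · rw [star_add, mul_add]; exact add_mem (ihb u hu).2.1 (ihc u hu).2.1
      · rw [star_add, mul_add]; exact add_mem (ihb u hu).2.2 (ihc u hu).2.2
    | zero =>
      intro u hu
      simp only [mul_zero, star_zero]
      exact ⟨⟨zero_mem _, zero_mem _⟩, zero_mem _, zero_mem _⟩
    | mul b c hb hc ihb ihc =>
      intro u hu
      refine ⟨⟨?_, ?_⟩, ?_, ?_⟩
      · rw [← mul_assoc]; exact (ihc (u * b) (ihb u hu).1.1).1.1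
      · rw [← mul_assoc]; exact (ihc (u * b) (ihb u hu).1.1).1.2
      · rw [star_mul, ← mul_assoc]; exact (ihb (u * star c) (ihc u hu).2.1).2.1
      · rw [star_mul, ← mul_assoc]; exact (ihb (u * star c) (ihc u hu).2.1).2.2
    | smul r b hb ih =>
      intro u hu
      have e1 : u * (r • b) = r • (u * b) := mul_smul_comm r u b
      have e2 : u * star (r • b) = r • (u * star b) := by
        rw [star_smul, star_trivial, mul_smul_comm]
      refine ⟨⟨?_, ?_⟩, ?_, ?_⟩
      · rw [e1]; exact Submodule.smul_of_tower_mem _ r (ih u hu).1.1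
      · rw [e1]; exact Submodule.smul_of_tower_mem _ r (ih u hu).1.2
      · rw [e2]; exact Submodule.smul_of_tower_mem _ r (ih u hu).2.1
      · rw [e2]; exact Submodule.smul_of_tower_mem _ r (ih u hu).2.2
    | star b hb ih =>
      intro u hu
      exact ⟨(ih u hu).2, by rw [star_star]; exact (ih u hu).1⟩
  -- Step 2: multiplying `x` by anything in the closure of the adjoin lands in the closure.
  have hmem : ∀ b ∈ closure (NonUnitalStarAlgebra.adjoin ℝ ({a} : Set A) : Set A),
      x * b ∈ closure (Submodule.span ℂ S : Set A) := by
    intro b hb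
    have himg : x * b ∈ closure ((fun c : A => x * c) ''
        (NonUnitalStarAlgebra.adjoin ℝ ({a} : Set A) : Set A)) :=
      image_closure_subset_closure_image (continuous_mul_left x) ⟨b, hb, rfl⟩
    refine closure_mono ?_ himg
    rintro _ ⟨c, hc, rfl⟩
    exact (key c hc x hx).1.2
  -- Step 3: `cfcₙ g a` lies in the closure of the adjoin.
  have hcfc_mem : ∀ (g : ℝ → ℝ), ContinuousOn g (quasispectrum ℝ a) → g 0 = 0 →
      cfcₙ g a ∈ closure (NonUnitalStarAlgebra.adjoin ℝ ({a} : Set A) : Set A) := by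
    intro g hg hg0
    have h₁ := (cfcₙHom_isClosedEmbedding ha (R := ℝ)).continuous.range_subset_closure_image_dense
      (ContinuousMapZero.adjoin_id_dense (quasispectrum ℝ a))
    have h₂ : cfcₙ g a ∈ Set.range (cfcₙHom ha (R := ℝ)) := by
      rw [cfcₙ_apply g a hg hg0 ha]; exact Set.mem_range_self _
    refine closure_mono ?_ (h₁ h₂)
    rintro _ ⟨φ, hφ, rfl⟩
    have hmap : cfcₙHom ha φ ∈ (NonUnitalStarAlgebra.adjoin ℝ
        {(ContinuousMapZero.id (quasispectrum ℝ a) : C(quasispectrum ℝ a, ℝ)₀)}).map (cfcₙHom ha) :=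
      ⟨φ, hφ, rfl⟩
    have hid : cfcₙHom ha (ContinuousMapZero.id (quasispectrum ℝ a)) = a :=
      cfcₙHom_id ha
    rwa [NonUnitalStarAlgHom.map_adjoin_singleton, hid] at hmap
  -- Step 4: approximate `x` by `x * cfcₙ g a`.
  rw [← SetLike.mem_coe, Submodule.topologicalClosure_coe, ← closure_closure]
  rw [Metric.mem_closure_iff]
  intro ε hε
  set δ : ℝ := (ε / 2) ^ 2 with hδ
  have hδpos : 0 < δ := by positivity
  set g : ℝ → ℝ := fun t => min 1 (|t| / δ) with hg_def
  have hgc : Continuous g := continuous_const.min (continuous_abs.div_const δ)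
  have hg0 : g 0 = 0 := by simp [hg_def]
  have hg_nonneg : ∀ t, 0 ≤ g t := fun t => le_min zero_le_one (by positivity)
  have hg_le_one : ∀ t, g t ≤ 1 := fun t => min_le_left _ _
  set b : A := cfcₙ g a with hb_def
  have hb_sa : IsSelfAdjoint b := cfcₙ_predicate g a
  have hxb : x * b ∈ closure (Submodule.span ℂ S : Set A) :=
    hmem b (hcfc_mem g hgc.continuousOn hg0)
  -- the key norm estimate
  have h1 : a * b = cfcₙ (fun t => t * g t) a := by
    rw [cfcₙ_mul _ _ a (by fun_prop) rfl hgc.continuousOn hg0, cfcₙ_id' ℝ a]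
  have h2 : b * a = cfcₙ (fun t => g t * t) a := by
    rw [cfcₙ_mul _ _ a hgc.continuousOn hg0 (by fun_prop) rfl, cfcₙ_id' ℝ a]
  have h3 : b * a * b = cfcₙ (fun t => g t * t * g t) a := by
    rw [cfcₙ_mul _ _ a (by fun_prop) (by simp [hg0]) hgc.continuousOn hg0, ← h2]
  have e : cfcₙ (fun t => t * (1 - g t) ^ 2) a = a - a * b - b * a + b * a * b := by
    calc cfcₙ (fun t => t * (1 - g t) ^ 2) a
        = cfcₙ (fun t => (t - t * g t - g t * t) + g t * t * g t) a :=
          cfcₙ_congr fun t _ => by ring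
      _ = cfcₙ (fun t => t - t * g t - g t * t) a + cfcₙ (fun t => g t * t * g t) a := by
          rw [cfcₙ_add _ _ a (by fun_prop) (by simp [hg0]) (by fun_prop) (by simp [hg0])]
      _ = cfcₙ (fun t => t - t * g t) a - cfcₙ (fun t => g t * t) a
            + cfcₙ (fun t => g t * t * g t) a := by
          rw [cfcₙ_sub _ _ a (by fun_prop) (by simp [hg0]) (by fun_prop) (by simp [hg0])]
      _ = cfcₙ (fun t : ℝ => t) a - cfcₙ (fun t => t * g t) a - cfcₙ (fun t => g t * t) a
            + cfcₙ (fun t => g t * t * g t) a := by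
          rw [cfcₙ_sub _ _ a (by fun_prop) (by simp) (by fun_prop) (by simp [hg0])]
      _ = a - a * b - b * a + b * a * b := by rw [cfcₙ_id' ℝ a, ← h1, ← h2, ← h3]
  have key_eq : star (x - x * b) * (x - x * b) = cfcₙ (fun t => t * (1 - g t) ^ 2) a := by
    have expand : star (x - x * b) * (x - x * b) = a - a * b - b * a + b * a * b := by
      rw [star_sub, star_mul, hb_sa.star_eq, ha_def]
      noncomm_ring
    rw [expand, e]
  have hnorm : ‖star (x - x * b) * (x - x * b)‖ ≤ δ := by
    rw [key_eq]
    apply norm_cfcₙ_le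
    intro t ht
    rcases le_or_gt δ |t| with h | h
    · have : g t = 1 := by
        rw [hg_def]
        exact min_eq_left (by rw [le_div_iff₀ hδpos]; linarith)
      simp [this]
      exact hδpos.le
    · have h4 : (1 - g t) ^ 2 ≤ 1 := by
        have := hg_nonneg t; have := hg_le_one t; nlinarith
      calc ‖t * (1 - g t) ^ 2‖ = |t| * (1 - g t) ^ 2 := by
            rw [Real.norm_eq_abs, abs_mul, abs_of_nonneg (sq_nonneg (1 - g t))]
        _ ≤ |t| * 1 := by
            have := abs_nonneg t; nlinarith
        _ ≤ δ := by linarith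
  have hdist : ‖x - x * b‖ ≤ ε / 2 := by
    have hc : ‖x - x * b‖ * ‖x - x * b‖ ≤ δ := by
      rw [← CStarRing.norm_star_mul_self]; exact hnorm
    nlinarith [norm_nonneg (x - x * b), hε]
  exact ⟨x * b, hxb, by rw [dist_eq_norm]; linarith⟩
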